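/- Let Γ be a group in which s₁ has infinite order, F ⊆ {s₁^k : k ∈ ℤ} finite, and Λ ≤ Γ a subgroup. Suppose B ⊆ Γ is horizontally connected, i.e. for every g ∈ Γ the set {k ∈ ℤ : g s₁^k ∈ B} is an interval of ℤ. Then B has the extension property relative to (F, Λ): every ψ : B → ℤ/2 with ψ(gF) = ψ(gtF) whenever gF ∪ gtF ⊆ B (g ∈ Γ, t ∈ Λ) extends to some χ : Γ → ℤ/2 with χ(gF) = χ(gtF) for all g ∈ Γ, t ∈ Λ. -/

import Mathlib

/-- Horizontal connectivity of a set `C` with respect to `s₁`. -/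
def HConn14 {Γ : Type*} [Group Γ] (s₁ : Γ) (C : Set Γ) : Prop :=
  ∀ (g : Γ) (k₁ k₂ k₃ : ℤ), k₁ ≤ k₂ → k₂ ≤ k₃ →
    g * s₁ ^ k₁ ∈ C → g * s₁ ^ k₃ ∈ C → g * s₁ ^ k₂ ∈ C

/-- Compatibility of `φ` on the set `C`. -/
def Compat14 {Γ : Type*} [Group Γ] (F : Finset Γ) (Λ : Subgroup Γ) (C : Set Γ)
    (φ : Γ → ZMod 2) : Prop :=
  ∀ g : Γ, ∀ t ∈ Λ, (∀ h ∈ F, g * h ∈ C) → (∀ h ∈ F, g * t * h ∈ C) →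
    ∑ h ∈ F, φ (g * h) = ∑ h ∈ F, φ (g * t * h)

lemma zmod2_aux : ∀ a b : ZMod 2, a + b + b = a := by decide

lemma zpow_inj14 {Γ : Type*} [Group Γ] {s₁ : Γ} (hs₁ : ∀ k : ℤ, s₁ ^ k = 1 → k = 0)
    {a b : ℤ} (h : s₁ ^ a = s₁ ^ b) : a = b := by
  have h1 : s₁ ^ (a - b) = 1 := by
    rw [zpow_sub, h]
    simp
  have := hs₁ _ h1
  omega


lemma helper14 {Γ : Type*} [Group Γ] (x s₁ : Γ) (a b c : ℤ) :
    x * s₁ ^ a * (s₁ ^ b)⁻¹ * s₁ ^ c = x * s₁ ^ (a - b + c) := by group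

lemma helper14' {Γ : Type*} [Group Γ] (x s₁ : Γ) (b c : ℤ) :
    x * (s₁ ^ b)⁻¹ * s₁ ^ c = x * s₁ ^ (c - b) := by group

lemma sum_shift14 {Γ : Type*} [Group Γ] (F : Finset Γ) (f : Γ → ZMod 2) {g g' : Γ}
    (h : g = g') : ∑ h ∈ F, f (g * h) = ∑ h ∈ F, f (g' * h) := by rw [h]

lemma sum_update_ne14 {Γ : Type*} [Group Γ] [DecidableEq Γ] (F : Finset Γ)
    (φ : Γ → ZMod 2) (v : ZMod 2) (x g : Γ) (hne : ∀ h ∈ F, g * h ≠ x) :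
    ∑ h ∈ F, Function.update φ x v (g * h) = ∑ h ∈ F, φ (g * h) :=
  Finset.sum_congr rfl fun h hh => Function.update_of_ne (hne h hh) v φ

lemma sum_update_x14 {Γ : Type*} [Group Γ] [DecidableEq Γ] (F : Finset Γ)
    (φ : Γ → ZMod 2) (v : ZMod 2) (x g : Γ) {h₀ : Γ} (hh₀ : h₀ ∈ F) (hx : g * h₀ = x) :
    ∑ h ∈ F, Function.update φ x v (g * h)
      = v + ∑ h ∈ F, Function.update φ x 0 (g * h) := by
  rw [← Finset.add_sum_erase F (fun h => Function.update φ x v (g * h)) hh₀,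
      ← Finset.add_sum_erase F (fun h => Function.update φ x 0 (g * h)) hh₀]
  have h1 : Function.update φ x v (g * h₀) = v := by rw [hx]; exact Function.update_self x v φ
  have h2 : Function.update φ x 0 (g * h₀) = 0 := by rw [hx]; exact Function.update_self x 0 φ
  have h3 : ∑ h ∈ F.erase h₀, Function.update φ x v (g * h)
      = ∑ h ∈ F.erase h₀, Function.update φ x 0 (g * h) := by
    refine Finset.sum_congr rfl fun h hh => ?_
    have hne : g * h ≠ x := fun e => (Finset.ne_of_mem_erase hh)
      (mul_left_cancel (e.trans hx.symm))
    rw [Function.update_of_ne hne, Function.update_of_ne hne]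
  simp only [h1, h2, h3, zero_add]

/-- Uniqueness of the translate of `F` covering the new point `x`. -/
lemma uniq14 {Γ : Type*} [Group Γ] {s₁ : Γ} (hs₁ : ∀ k : ℤ, s₁ ^ k = 1 → k = 0)
    {F : Finset Γ} (hF : ∀ h ∈ F, ∃ k : ℤ, h = s₁ ^ k) {C : Set Γ}
    (hC : HConn14 s₁ C) {x : Γ} (hx : x ∉ C) {g₁ g₂ : Γ}
    (h₁C : ∀ h ∈ F, g₁ * h ∈ insert x C) (h₁x : ∃ h ∈ F, g₁ * h = x)
    (h₂C : ∀ h ∈ F, g₂ * h ∈ insert x C) (h₂x : ∃ h ∈ F, g₂ * h = x) : g₁ = g₂ := by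
  obtain ⟨a, ha, hax⟩ := h₁x
  obtain ⟨b, hb, hbx⟩ := h₂x
  obtain ⟨ka, rfl⟩ := hF a ha
  obtain ⟨kb, rfl⟩ := hF b hb
  have key : ∀ kp kq : ℤ, kp < kq → x * s₁ ^ (kq - kp) ∈ insert x C →
      x * s₁ ^ (kp - kq) ∈ insert x C → False := by
    intro kp kq hlt hm1 hm2
    have h1 : x * s₁ ^ (kq - kp) ∈ C := by
      rcases Set.mem_insert_iff.1 hm1 with e | m
      · exfalso
        have := hs₁ _ (mul_eq_left.mp e)
        omega
      · exact m
    have h2 : x * s₁ ^ (kp - kq) ∈ C := by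
      rcases Set.mem_insert_iff.1 hm2 with e | m
      · exfalso
        have := hs₁ _ (mul_eq_left.mp e)
        omega
      · exact m
    have := hC x (kp - kq) 0 (kq - kp) (by omega) (by omega) h2 h1
    rw [zpow_zero, mul_one] at this
    exact hx this
  have e₁ : g₁ = x * (s₁ ^ ka)⁻¹ := eq_mul_inv_of_mul_eq hax
  have e₂ : g₂ = x * (s₁ ^ kb)⁻¹ := eq_mul_inv_of_mul_eq hbx
  have m₁ : x * s₁ ^ (kb - ka) ∈ insert x C := by
    have eq1 : g₁ * s₁ ^ kb = x * s₁ ^ (kb - ka) := by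
      rw [e₁]; exact helper14' x s₁ ka kb
    rw [← eq1]; exact h₁C _ hb
  have m₂ : x * s₁ ^ (ka - kb) ∈ insert x C := by
    have eq2 : g₂ * s₁ ^ ka = x * s₁ ^ (ka - kb) := by
      rw [e₂]; exact helper14' x s₁ kb ka
    rw [← eq2]; exact h₂C _ ha
  rcases lt_trichotomy ka kb with h | h | h
  · exact (key ka kb h m₁ m₂).elim
  · rw [e₁, e₂, h]
  · exact (key kb ka h m₂ m₁).elim

/-- One-step extension of a compatible function. -/
lemma step14 {Γ : Type*} [Group Γ] [DecidableEq Γ] {s₁ : Γ}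
    (hs₁ : ∀ k : ℤ, s₁ ^ k = 1 → k = 0)
    {F : Finset Γ} (hF : ∀ h ∈ F, ∃ k : ℤ, h = s₁ ^ k) {Λ : Subgroup Γ}
    {C : Set Γ} {φ : Γ → ZMod 2} (hC : HConn14 s₁ C) (hcomp : Compat14 F Λ C φ)
    {x : Γ} (hx : x ∉ C) :
    ∃ v, Compat14 F Λ (insert x C) (Function.update φ x v) := by
  by_cases hG : ∃ g₀, (∀ h ∈ F, g₀ * h ∈ insert x C) ∧ ∃ h ∈ F, g₀ * h = x
  · obtain ⟨g₀, hg₀C, hg₀x⟩ := hG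
    by_cases hU : ∃ u, (∃ t ∈ Λ, g₀ * t = u) ∧ ∀ h ∈ F, u * h ∈ C
    · obtain ⟨u, ⟨t₀, ht₀, hut⟩, huC⟩ := hU
      refine ⟨(∑ h ∈ F, φ (u * h)) + ∑ h ∈ F, Function.update φ x 0 (g₀ * h), ?_⟩
      intro g t ht hgC hgtC
      by_cases hgx : ∃ h ∈ F, g * h = x
      · have hg_eq : g = g₀ := uniq14 hs₁ hF hC hx hgC hgx hg₀C hg₀x
        by_cases hgtx : ∃ h ∈ F, g * t * h = x
        · have hgt_eq : g * t = g₀ := uniq14 hs₁ hF hC hx hgtC hgtx hg₀C hg₀x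
          have : g * t = g := hgt_eq.trans hg_eq.symm
          exact (sum_shift14 F _ this).symm
        · have hgtC' : ∀ h ∈ F, g * t * h ∈ C := fun h hh =>
            (Set.mem_insert_iff.1 (hgtC h hh)).resolve_left (fun e => hgtx ⟨h, hh, e⟩)
          obtain ⟨h₀, hh₀, hgh₀⟩ := hgx
          rw [sum_update_x14 F φ _ x g hh₀ hgh₀,
              sum_update_ne14 F φ _ x (g * t) (fun h hh e => hx (e ▸ hgtC' h hh))]
          have e3 : ∑ h ∈ F, Function.update φ x 0 (g * h)
              = ∑ h ∈ F, Function.update φ x 0 (g₀ * h) := by rw [hg_eq]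
          rw [e3, zmod2_aux]
          have hkey : u * (t₀⁻¹ * t) = g₀ * t := by rw [← hut]; group
          have := hcomp u (t₀⁻¹ * t) (mul_mem (inv_mem ht₀) ht) huC
            (by intro h hh; rw [hkey, ← hg_eq]; exact hgtC' h hh)
          have e4 : ∑ h ∈ F, φ (u * (t₀⁻¹ * t) * h) = ∑ h ∈ F, φ (g * t * h) := by
            rw [hkey, hg_eq]
          exact this.trans e4
      · have hgC' : ∀ h ∈ F, g * h ∈ C := fun h hh =>
          (Set.mem_insert_iff.1 (hgC h hh)).resolve_left (fun e => hgx ⟨h, hh, e⟩)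
        by_cases hgtx : ∃ h ∈ F, g * t * h = x
        · have hgt_eq : g * t = g₀ := uniq14 hs₁ hF hC hx hgtC hgtx hg₀C hg₀x
          obtain ⟨h₀, hh₀, hgh₀⟩ := hgtx
          rw [sum_update_ne14 F φ _ x g (fun h hh e => hx (e ▸ hgC' h hh)),
              sum_update_x14 F φ _ x (g * t) hh₀ hgh₀]
          have e3 : ∑ h ∈ F, Function.update φ x 0 (g * t * h)
              = ∑ h ∈ F, Function.update φ x 0 (g₀ * h) := by rw [hgt_eq]
          rw [e3, zmod2_aux]
          have hkey : g * (t * t₀) = u := by rw [← mul_assoc, hgt_eq, hut]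
          have := hcomp g (t * t₀) (mul_mem ht ht₀) hgC'
            (by intro h hh; rw [hkey]; exact huC h hh)
          have e4 : ∑ h ∈ F, φ (g * (t * t₀) * h) = ∑ h ∈ F, φ (u * h) := by rw [hkey]
          exact this.trans e4
        · have hgtC' : ∀ h ∈ F, g * t * h ∈ C := fun h hh =>
            (Set.mem_insert_iff.1 (hgtC h hh)).resolve_left (fun e => hgtx ⟨h, hh, e⟩)
          rw [sum_update_ne14 F φ _ x g (fun h hh e => hx (e ▸ hgC' h hh)),
              sum_update_ne14 F φ _ x (g * t) (fun h hh e => hx (e ▸ hgtC' h hh))]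
          exact hcomp g t ht hgC' hgtC'
    · refine ⟨0, ?_⟩
      intro g t ht hgC hgtC
      by_cases hgx : ∃ h ∈ F, g * h = x
      · have hg_eq : g = g₀ := uniq14 hs₁ hF hC hx hgC hgx hg₀C hg₀x
        by_cases hgtx : ∃ h ∈ F, g * t * h = x
        · have hgt_eq : g * t = g₀ := uniq14 hs₁ hF hC hx hgtC hgtx hg₀C hg₀x
          have : g * t = g := hgt_eq.trans hg_eq.symm
          exact (sum_shift14 F _ this).symm
        · exfalso
          have hgtC' : ∀ h ∈ F, g * t * h ∈ C := fun h hh =>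
            (Set.mem_insert_iff.1 (hgtC h hh)).resolve_left (fun e => hgtx ⟨h, hh, e⟩)
          exact hU ⟨g * t, ⟨t, ht, by rw [hg_eq]⟩, hgtC'⟩
      · have hgC' : ∀ h ∈ F, g * h ∈ C := fun h hh =>
          (Set.mem_insert_iff.1 (hgC h hh)).resolve_left (fun e => hgx ⟨h, hh, e⟩)
        by_cases hgtx : ∃ h ∈ F, g * t * h = x
        · exfalso
          have hgt_eq : g * t = g₀ := uniq14 hs₁ hF hC hx hgtC hgtx hg₀C hg₀x
          exact hU ⟨g, ⟨t⁻¹, inv_mem ht, by rw [← hgt_eq]; group⟩, hgC'⟩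
        · have hgtC' : ∀ h ∈ F, g * t * h ∈ C := fun h hh =>
            (Set.mem_insert_iff.1 (hgtC h hh)).resolve_left (fun e => hgtx ⟨h, hh, e⟩)
          rw [sum_update_ne14 F φ _ x g (fun h hh e => hx (e ▸ hgC' h hh)),
              sum_update_ne14 F φ _ x (g * t) (fun h hh e => hx (e ▸ hgtC' h hh))]
          exact hcomp g t ht hgC' hgtC'
  · refine ⟨0, ?_⟩
    intro g t ht hgC hgtC
    have hgC' : ∀ h ∈ F, g * h ∈ C := fun h hh =>
      (Set.mem_insert_iff.1 (hgC h hh)).resolve_left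
        (fun e => hG ⟨g, hgC, ⟨h, hh, e⟩⟩)
    have hgtC' : ∀ h ∈ F, g * t * h ∈ C := fun h hh =>
      (Set.mem_insert_iff.1 (hgtC h hh)).resolve_left
        (fun e => hG ⟨g * t, hgtC, ⟨h, hh, e⟩⟩)
    rw [sum_update_ne14 F φ _ x g (fun h hh e => hx (e ▸ hgC' h hh)),
        sum_update_ne14 F φ _ x (g * t) (fun h hh e => hx (e ▸ hgtC' h hh))]
    exact hcomp g t ht hgC' hgtC'

/-- There is always a point outside `C` that can be added preserving horizontal
connectivity. -/
lemma next14 {Γ : Type*} [Group Γ] {s₁ : Γ} (hs₁ : ∀ k : ℤ, s₁ ^ k = 1 → k = 0)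
    {C : Set Γ} (hC : HConn14 s₁ C) {x : Γ} (hx : x ∉ C) :
    ∃ x', x' ∉ C ∧ HConn14 s₁ (insert x' C) := by
  by_cases hJ : ∃ j : ℤ, x * s₁ ^ j ∈ C
  · by_cases hpos : ∃ j : ℤ, 0 < j ∧ x * s₁ ^ j ∈ C
    · have hall : ∀ j : ℤ, x * s₁ ^ j ∈ C → 0 < j := by
        intro j hj
        by_contra hle
        obtain ⟨jp, hjp, hjpC⟩ := hpos
        have hj0 : j ≠ 0 := by
          rintro rfl
          rw [zpow_zero, mul_one] at hj
          exact hx hj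
        have := hC x j 0 jp (by omega) (by omega) hj hjpC
        rw [zpow_zero, mul_one] at this
        exact hx this
      obtain ⟨m, hmC, hmin⟩ := Int.exists_least_of_bdd
        (P := fun j => x * s₁ ^ j ∈ C) ⟨0, fun z hz => (hall z hz).le⟩ hJ
      refine ⟨x * s₁ ^ (m - 1), fun hmem => by have := hmin _ hmem; omega, ?_⟩
      intro g k₁ k₂ k₃ h12 h23 h1 h3
      rcases Set.mem_insert_iff.1 h1 with e1 | c1
      · rcases Set.mem_insert_iff.1 h3 with e3 | c3
        · have hk : k₁ = k₃ := zpow_inj14 hs₁ (mul_left_cancel (e1.trans e3.symm))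
          have : k₂ = k₁ := by omega
          rw [this]; exact h1
        · have hg : g = x * s₁ ^ (m - 1) * (s₁ ^ k₁)⁻¹ := eq_mul_inv_of_mul_eq e1
          have e : ∀ k : ℤ, g * s₁ ^ k = x * s₁ ^ (m - 1 - k₁ + k) := by
            intro k; rw [hg]; exact helper14 x s₁ (m - 1) k₁ k
          have c3' : x * s₁ ^ (m - 1 - k₁ + k₃) ∈ C := by rw [← e k₃]; exact c3
          have h3m : m ≤ m - 1 - k₁ + k₃ := hmin _ c3'
          by_cases hk : k₂ = k₁
          · rw [hk]; exact h1
          · have hmem : x * s₁ ^ (m - 1 - k₁ + k₂) ∈ C :=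
              hC x m (m - 1 - k₁ + k₂) (m - 1 - k₁ + k₃) (by omega) (by omega) hmC c3'
            exact Set.mem_insert_of_mem _ (by rw [e k₂]; exact hmem)
      · rcases Set.mem_insert_iff.1 h3 with e3 | c3
        · exfalso
          have hg : g = x * s₁ ^ (m - 1) * (s₁ ^ k₃)⁻¹ := eq_mul_inv_of_mul_eq e3
          have e : g * s₁ ^ k₁ = x * s₁ ^ (m - 1 - k₃ + k₁) := by
            rw [hg]; exact helper14 x s₁ (m - 1) k₃ k₁
          have : m ≤ m - 1 - k₃ + k₁ := hmin _ (by rw [← e]; exact c1)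
          omega
        · exact Set.mem_insert_of_mem _ (hC g k₁ k₂ k₃ h12 h23 c1 c3)
    · have hall : ∀ j : ℤ, x * s₁ ^ j ∈ C → j < 0 := by
        intro j hj
        by_contra hle
        have hj0 : j ≠ 0 := by
          rintro rfl
          rw [zpow_zero, mul_one] at hj
          exact hx hj
        exact hpos ⟨j, by omega, hj⟩
      obtain ⟨M, hMC, hmax⟩ := Int.exists_greatest_of_bdd
        (P := fun j => x * s₁ ^ j ∈ C) ⟨0, fun z hz => (hall z hz).le⟩ hJ
      refine ⟨x * s₁ ^ (M + 1), fun hmem => by have := hmax _ hmem; omega, ?_⟩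
      intro g k₁ k₂ k₃ h12 h23 h1 h3
      rcases Set.mem_insert_iff.1 h1 with e1 | c1
      · rcases Set.mem_insert_iff.1 h3 with e3 | c3
        · have hk : k₁ = k₃ := zpow_inj14 hs₁ (mul_left_cancel (e1.trans e3.symm))
          have : k₂ = k₁ := by omega
          rw [this]; exact h1
        · exfalso
          have hg : g = x * s₁ ^ (M + 1) * (s₁ ^ k₁)⁻¹ := eq_mul_inv_of_mul_eq e1
          have e : g * s₁ ^ k₃ = x * s₁ ^ (M + 1 - k₁ + k₃) := by
            rw [hg]; exact helper14 x s₁ (M + 1) k₁ k₃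
          have : M + 1 - k₁ + k₃ ≤ M := hmax _ (by rw [← e]; exact c3)
          omega
      · rcases Set.mem_insert_iff.1 h3 with e3 | c3
        · have hg : g = x * s₁ ^ (M + 1) * (s₁ ^ k₃)⁻¹ := eq_mul_inv_of_mul_eq e3
          have e : ∀ k : ℤ, g * s₁ ^ k = x * s₁ ^ (M + 1 - k₃ + k) := by
            intro k; rw [hg]; exact helper14 x s₁ (M + 1) k₃ k
          have c1' : x * s₁ ^ (M + 1 - k₃ + k₁) ∈ C := by rw [← e k₁]; exact c1
          have h1M : M + 1 - k₃ + k₁ ≤ M := hmax _ c1'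
          by_cases hk : k₂ = k₃
          · rw [hk]; exact h3
          · have hmem : x * s₁ ^ (M + 1 - k₃ + k₂) ∈ C :=
              hC x (M + 1 - k₃ + k₁) (M + 1 - k₃ + k₂) M (by omega) (by omega) c1' hMC
            exact Set.mem_insert_of_mem _ (by rw [e k₂]; exact hmem)
        · exact Set.mem_insert_of_mem _ (hC g k₁ k₂ k₃ h12 h23 c1 c3)
  · refine ⟨x, hx, ?_⟩
    intro g k₁ k₂ k₃ h12 h23 h1 h3
    rcases Set.mem_insert_iff.1 h1 with e1 | c1
    · rcases Set.mem_insert_iff.1 h3 with e3 | c3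
      · have hk : k₁ = k₃ := zpow_inj14 hs₁ (mul_left_cancel (e1.trans e3.symm))
        have : k₂ = k₁ := by omega
        rw [this]; exact h1
      · exfalso
        have hg : g = x * (s₁ ^ k₁)⁻¹ := eq_mul_inv_of_mul_eq e1
        have e : g * s₁ ^ k₃ = x * s₁ ^ (k₃ - k₁) := by
          rw [hg]; exact helper14' x s₁ k₁ k₃
        exact hJ ⟨k₃ - k₁, by rw [← e]; exact c3⟩
    · rcases Set.mem_insert_iff.1 h3 with e3 | c3
      · exfalso
        have hg : g = x * (s₁ ^ k₃)⁻¹ := eq_mul_inv_of_mul_eq e3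
        have e : g * s₁ ^ k₁ = x * s₁ ^ (k₁ - k₃) := by
          rw [hg]; exact helper14' x s₁ k₃ k₁
        exact hJ ⟨k₁ - k₃, by rw [← e]; exact c1⟩
      · exact Set.mem_insert_of_mem _ (hC g k₁ k₂ k₃ h12 h23 c1 c3)

/-- Extension lemma: if `s₁ ∈ Γ` has infinite order, `F` is a finite subset
of the cyclic subgroup generated by `s₁`, `Λ ≤ Γ` is a subgroup and `B ⊆ Γ` is horizontally
connected, then every `ψ : B → ℤ/2` satisfying the compatibility conditions
`ψ(gF) = ψ(gtF)` whenever `gF ∪ gtF ⊆ B` extends to `χ : Γ → ℤ/2` satisfying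
`χ(gF) = χ(gtF)` for all `g ∈ Γ`, `t ∈ Λ`. -/
theorem stmt_14 {Γ : Type*} [Group Γ] [Countable Γ] (s₁ : Γ)
    (hs₁ : ∀ k : ℤ, s₁ ^ k = 1 → k = 0)
    (F : Finset Γ) (hF : ∀ h ∈ F, ∃ k : ℤ, h = s₁ ^ k)
    (Λ : Subgroup Γ) (B : Set Γ)
    (hB : ∀ (g : Γ) (k₁ k₂ k₃ : ℤ), k₁ ≤ k₂ → k₂ ≤ k₃ →
      g * s₁ ^ k₁ ∈ B → g * s₁ ^ k₃ ∈ B → g * s₁ ^ k₂ ∈ B)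
    (ψ : Γ → ZMod 2)
    (hψ : ∀ (g : Γ), ∀ t ∈ Λ,
      (∀ h ∈ F, g * h ∈ B) → (∀ h ∈ F, g * t * h ∈ B) →
      ∑ h ∈ F, ψ (g * h) = ∑ h ∈ F, ψ (g * t * h)) :
    ∃ χ : Γ → ZMod 2, (∀ b ∈ B, χ b = ψ b) ∧
      ∀ (g : Γ), ∀ t ∈ Λ, ∑ h ∈ F, χ (g * h) = ∑ h ∈ F, χ (g * t * h) := by
  classical
  letI : Preorder (Set Γ × (Γ → ZMod 2)) :=
    { le := fun p q => p.1 ⊆ q.1 ∧ ∀ y ∈ p.1, p.2 y = q.2 y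
      le_refl := fun p => ⟨subset_rfl, fun y _ => rfl⟩
      le_trans := fun p q r hpq hqr =>
        ⟨hpq.1.trans hqr.1, fun y hy => (hpq.2 y hy).trans (hqr.2 y (hpq.1 hy))⟩ }
  have le_def : ∀ p q : Set Γ × (Γ → ZMod 2),
      p ≤ q ↔ p.1 ⊆ q.1 ∧ ∀ y ∈ p.1, p.2 y = q.2 y := fun _ _ => Iff.rfl
  set s : Set (Set Γ × (Γ → ZMod 2)) :=
    {p | B ⊆ p.1 ∧ (∀ b ∈ B, p.2 b = ψ b) ∧ HConn14 s₁ p.1 ∧ Compat14 F Λ p.1 p.2} with hs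
  have hbase : ((B, ψ) : Set Γ × (Γ → ZMod 2)) ∈ s :=
    ⟨subset_rfl, fun b _ => rfl, hB, hψ⟩
  have hchainub : ∀ c ⊆ s, IsChain (· ≤ ·) c → ∀ y ∈ c, ∃ ub ∈ s, ∀ z ∈ c, z ≤ ub := by
    intro c hcs hchain y hy
    set φu : Γ → ZMod 2 :=
      fun z => if h : ∃ q, q ∈ c ∧ z ∈ q.1 then h.choose.2 z else ψ z with hφu
    have hval : ∀ p ∈ c, ∀ z ∈ p.1, φu z = p.2 z := by
      intro p hp z hz
      have hex : ∃ q, q ∈ c ∧ z ∈ q.1 := ⟨p, hp, hz⟩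
      have hq := hex.choose_spec
      have hgoal : φu z = hex.choose.2 z := by
        rw [hφu]
        exact dif_pos hex
      rw [hgoal]
      by_cases hpq : p = hex.choose
      · rw [hpq]
      · rcases hchain hp hq.1 hpq with h | h
        · exact ((le_def _ _).1 h).2 z hz |>.symm
        · exact ((le_def _ _).1 h).2 z hq.2
    refine ⟨⟨⋃ p ∈ c, p.1, φu⟩, ⟨?_, ?_, ?_, ?_⟩, ?_⟩
    · intro b hb
      exact Set.mem_biUnion hy ((hcs hy).1 hb)
    · intro b hb
      show φu b = ψ b
      rw [hval y hy b ((hcs hy).1 hb)]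
      exact (hcs hy).2.1 b hb
    · intro g k₁ k₂ k₃ h12 h23 h1 h3
      obtain ⟨p, hp, hp1⟩ := Set.mem_iUnion₂.1 h1
      obtain ⟨q, hq, hq3⟩ := Set.mem_iUnion₂.1 h3
      by_cases hpq : p = q
      · subst hpq
        exact Set.mem_biUnion hp ((hcs hp).2.2.1 g k₁ k₂ k₃ h12 h23 hp1 hq3)
      · rcases hchain hp hq hpq with h | h
        · exact Set.mem_biUnion hq
            ((hcs hq).2.2.1 g k₁ k₂ k₃ h12 h23 (((le_def _ _).1 h).1 hp1) hq3)
        · exact Set.mem_biUnion hp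
            ((hcs hp).2.2.1 g k₁ k₂ k₃ h12 h23 hp1 (((le_def _ _).1 h).1 hq3))
    · intro g t ht hg hgt
      have two : ∀ u ∈ c, ∀ w ∈ c, ∃ r ∈ c, u ≤ r ∧ w ≤ r := by
        intro u hu w hw
        by_cases he : u = w
        · exact ⟨u, hu, le_refl u, he ▸ le_refl u⟩
        · rcases hchain hu hw he with h | h
          · exact ⟨w, hw, h, le_refl w⟩
          · exact ⟨u, hu, le_refl u, h⟩
      have main : ∀ F' : Finset Γ, (∀ h ∈ F', g * h ∈ ⋃ p ∈ c, p.1) →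
          (∀ h ∈ F', g * t * h ∈ ⋃ p ∈ c, p.1) →
          ∃ r ∈ c, (∀ h ∈ F', g * h ∈ r.1) ∧ (∀ h ∈ F', g * t * h ∈ r.1) := by
        intro F'
        induction F' using Finset.induction_on with
        | empty => intro _ _; exact ⟨y, hy, by simp, by simp⟩
        | @insert a F'' hna ih =>
          intro hg' hgt'
          obtain ⟨r₁, hr₁, hr₁g, hr₁gt⟩ := ih
            (fun h hh => hg' h (Finset.mem_insert_of_mem hh))
            (fun h hh => hgt' h (Finset.mem_insert_of_mem hh))
          obtain ⟨p₁, hp₁, hp₁m⟩ := Set.mem_iUnion₂.1 (hg' a (Finset.mem_insert_self a _))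
          obtain ⟨p₂, hp₂, hp₂m⟩ := Set.mem_iUnion₂.1 (hgt' a (Finset.mem_insert_self a _))
          obtain ⟨r₂, hr₂, hle1, hle2⟩ := two r₁ hr₁ p₁ hp₁
          obtain ⟨r₃, hr₃, hle3, hle4⟩ := two r₂ hr₂ p₂ hp₂
          refine ⟨r₃, hr₃, ?_, ?_⟩
          · intro h hh
            rcases Finset.mem_insert.1 hh with rfl | hh'
            · exact ((le_def _ _).1 hle3).1 (((le_def _ _).1 hle2).1 hp₁m)
            · exact ((le_def _ _).1 hle3).1 (((le_def _ _).1 hle1).1 (hr₁g h hh'))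
          · intro h hh
            rcases Finset.mem_insert.1 hh with rfl | hh'
            · exact ((le_def _ _).1 hle4).1 hp₂m
            · exact ((le_def _ _).1 hle3).1 (((le_def _ _).1 hle1).1 (hr₁gt h hh'))
      obtain ⟨r, hrc, hr1, hr2⟩ := main F hg hgt
      calc ∑ h ∈ F, φu (g * h) = ∑ h ∈ F, r.2 (g * h) :=
            Finset.sum_congr rfl fun h hh => hval r hrc _ (hr1 h hh)
        _ = ∑ h ∈ F, r.2 (g * t * h) := (hcs hrc).2.2.2 g t ht hr1 hr2
        _ = ∑ h ∈ F, φu (g * t * h) :=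
            (Finset.sum_congr rfl fun h hh => hval r hrc _ (hr2 h hh)).symm
    · intro z hz
      exact ⟨fun w hw => Set.mem_biUnion hz hw, fun w hw => (hval z hz w hw).symm⟩
  obtain ⟨m, _, hm⟩ := zorn_le_nonempty₀ s hchainub (B, ψ) hbase
  have hms : m ∈ s := hm.1
  have hΓ : ∀ y : Γ, y ∈ m.1 := by
    by_contra hcon
    push_neg at hcon
    obtain ⟨x, hxm⟩ := hcon
    obtain ⟨x', hx', hC'⟩ := next14 hs₁ hms.2.2.1 hxm
    obtain ⟨v, hcomp'⟩ := step14 hs₁ hF hms.2.2.1 hms.2.2.2 hx'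
    have hqs : (⟨insert x' m.1, Function.update m.2 x' v⟩ : Set Γ × (Γ → ZMod 2)) ∈ s :=
      ⟨hms.1.trans (Set.subset_insert _ _),
       fun b hb => by
        show Function.update m.2 x' v b = ψ b
        rw [Function.update_of_ne (show b ≠ x' from fun e => hx' (e ▸ hms.1 hb))]
        exact hms.2.1 b hb,
       hC', hcomp'⟩
    have hmq : m ≤ ⟨insert x' m.1, Function.update m.2 x' v⟩ :=
      ⟨Set.subset_insert _ _,
       fun y hy => (Function.update_of_ne (show y ≠ x' from fun e => hx' (e ▸ hy)) _ _).symm⟩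
    have := hm.2 hqs hmq
    exact hx' (((le_def _ _).1 this).1 (Set.mem_insert _ _))
  exact ⟨m.2, fun b hb => hms.2.1 b hb,
    fun g t ht => hms.2.2.2 g t ht (fun h _ => hΓ _) (fun h _ => hΓ _)⟩
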